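/- Assume E[|D₁|] < ∞. Then there is a constant C depending only on E[|D₁|] such that for all n ∈ ℕ, all σ ∈ (0,1] and all z ∈ [0, 1/(2σ)), the distribution function H(z) := P(σ⁻¹|Y₁ − X_{(1)}| ≤ z) of the normalized distance to the nearest parent satisfies | H(z) − ( 1 − (1 − G(z))(1 − 2σz)^{n−1} ) | ≤ C σ (z + 1). -/

import Mathlib

open MeasureTheory Filter Set ProbabilityTheory
open scoped ENNReal

noncomputable section

/-- The i.i.d. dispersal model: `X₁,…,X_n` i.i.d. uniform on `[0,1]`, `D₁,…,D_n` i.i.d.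
with density `f`, all `2n` variables jointly independent; the children are
`Y_i = X_i + σ D_i`. -/
structure IsIIDModel {Ω : Type*} [MeasurableSpace Ω] (P : Measure Ω)
    (n : ℕ) (σ : ℝ) (f : ℝ → ℝ) (X D : Fin n → Ω → ℝ) : Prop where
  prob : IsProbabilityMeasure P
  sigma_pos : 0 < σ
  sigma_le_one : σ ≤ 1
  f_meas : Measurable f
  f_nonneg : ∀ z, 0 ≤ f z
  f_prob : ∫ z, f z = 1
  X_meas : ∀ i, Measurable (X i)
  D_meas : ∀ i, Measurable (D i)
  lawX : ∀ i, Measure.map (X i) P = volume.restrict (Set.Icc (0:ℝ) 1)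
  lawD : ∀ i, Measure.map (D i) P = volume.withDensity fun z => ENNReal.ofReal (f z)
  indep : iIndepFun (m := fun _ : Fin n ⊕ Fin n => Real.measurableSpace) (Sum.elim X D) P

/-- The children `Y_i = X_i + σ D_i`. -/
def Ychild {Ω : Type*} {n : ℕ} (σ : ℝ) (X D : Fin n → Ω → ℝ) (i : Fin n) (ω : Ω) : ℝ :=
  X i ω + σ * D i ω

/-- `Xnear` is a nearest-parent selection: `Xnear i` takes values among the parents and
minimizes the distance to the child `Y_i`. -/
def IsNearestParent {Ω : Type*} [MeasurableSpace Ω] {n : ℕ} (σ : ℝ) (X D Xnear : Fin n → Ω → ℝ) : Prop :=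
  (∀ i, Measurable (Xnear i)) ∧
  (∀ (i : Fin n) (ω : Ω), ∃ j, Xnear i ω = X j ω) ∧
  (∀ (i j : Fin n) (ω : Ω), |Ychild σ X D i ω - Xnear i ω| ≤ |Ychild σ X D i ω - X j ω|)

end

private lemma abs_toReal_sub_le' {a b c : ℝ≥0∞} (ha : a ≠ ⊤) (hb : b ≠ ⊤) (hc : c ≠ ⊤)
    (h1 : a ≤ b + c) (h2 : b ≤ a + c) : |a.toReal - b.toReal| ≤ c.toReal := by
  rw [abs_sub_le_iff]
  constructor
  · have := ENNReal.toReal_mono (ENNReal.add_ne_top.mpr ⟨hb, hc⟩) h1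
    rw [ENNReal.toReal_add hb hc] at this; linarith
  · have := ENNReal.toReal_mono (ENNReal.add_ne_top.mpr ⟨ha, hc⟩) h2
    rw [ENNReal.toReal_add ha hc] at this; linarith


/-- (Lemma 12: Brown's relation between the distribution function `H` of
the normalized distance to the nearest parent and the dispersal-distance distribution
function `G`, with a constant depending only on `E[|D₁|]`). -/
theorem brown_relation (m : ℝ) :
    ∃ C : ℝ, 0 < C ∧
      ∀ (Ω : Type) (_ : MeasurableSpace Ω) (P : Measure Ω)
        (n : ℕ) (hn : 0 < n) (σ : ℝ) (f : ℝ → ℝ) (X D : Fin n → Ω → ℝ),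
        IsIIDModel P n σ f X D →
        Integrable (fun ω => |D ⟨0, hn⟩ ω|) P →
        (∫ ω, |D ⟨0, hn⟩ ω| ∂P) = m →
        ∀ (Xnear : Fin n → Ω → ℝ), IsNearestParent σ X D Xnear →
        ∀ z : ℝ, z ∈ Set.Ico (0 : ℝ) (1 / (2 * σ)) →
          |(P {ω | σ⁻¹ * |Ychild σ X D ⟨0, hn⟩ ω - Xnear ⟨0, hn⟩ ω| ≤ z}).toReal
              - (1 - (1 - (P {ω | |D ⟨0, hn⟩ ω| ≤ z}).toReal) * (1 - 2 * σ * z) ^ (n - 1))|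
            ≤ C * σ * (z + 1) := by
  classical
  refine ⟨2 + 2 * |m|, by positivity, ?_⟩
  intro Ω mΩ P n hn σ f X D hM hInt hm Xnear hNear z hz
  obtain ⟨hz0, hz1⟩ := hz
  set i0 : Fin n := ⟨0, hn⟩ with hi0def
  have hσ : 0 < σ := hM.sigma_pos
  haveI hPprob : IsProbabilityMeasure P := hM.prob
  have hm0 : 0 ≤ m := hm ▸ integral_nonneg fun ω => abs_nonneg _
  have h2σz : 2 * σ * z < 1 := by
    have := (lt_div_iff₀ (by positivity : (0:ℝ) < 2 * σ)).mp hz1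
    linarith
  have hσz0 : 0 ≤ σ * z := by positivity
  set μX : Measure ℝ := volume.restrict (Set.Icc (0:ℝ) 1) with hμXdef
  set μD : Measure ℝ := P.map (D i0) with hμDdef
  have hXmeas : Measurable (X i0) := hM.X_meas i0
  have hDmeas : Measurable (D i0) := hM.D_meas i0
  have hμX_univ : μX Set.univ = 1 := by
    simp [hμXdef, Real.volume_Icc]
  haveI : IsProbabilityMeasure μX := ⟨hμX_univ⟩
  haveI : IsProbabilityMeasure μD := Measure.isProbabilityMeasure_map hDmeas.aemeasurable
  set μV : Measure (ℝ × ℝ) := μX.prod μD with hμVdef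
  haveI : IsProbabilityMeasure μV := by rw [hμVdef]; infer_instance
  -- the pair and the other parents
  set V : Ω → ℝ × ℝ := fun ω => (X i0 ω, D i0 ω) with hVdef
  set W : Ω → ({j : Fin n // j ≠ i0} → ℝ) := fun ω j => X j.1 ω with hWdef
  have hV : Measurable V := hXmeas.prodMk hDmeas
  have hW : Measurable W := measurable_pi_lambda _ fun j => hM.X_meas j.1
  set μW : Measure ({j : Fin n // j ≠ i0} → ℝ) := P.map W with hμWdef
  haveI : IsProbabilityMeasure μW := Measure.isProbabilityMeasure_map hW.aemeasurable
  -- the key event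
  set S_set : Set ((ℝ × ℝ) × ({j : Fin n // j ≠ i0} → ℝ)) :=
    {p | z < |p.1.2|} ∩ ⋂ j : {j : Fin n // j ≠ i0}, {p | σ * z < |p.1.1 + σ * p.1.2 - p.2 j|}
    with hSdef
  have hS : MeasurableSet S_set := by
    refine (measurableSet_lt measurable_const measurable_fst.snd.abs).inter
      (MeasurableSet.iInter fun j => measurableSet_lt measurable_const
        ((((measurable_fst.fst).add ((measurable_fst.snd).const_mul σ)).sub
          ((measurable_pi_apply j).comp measurable_snd)).abs))
  set A : Set Ω := (fun ω => (V ω, W ω)) ⁻¹' S_set with hAdef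
  have hAmeas : MeasurableSet A := (hV.prodMk hW) hS
  have hAmem : ∀ ω, ω ∈ A ↔ (z < |D i0 ω| ∧ ∀ j : Fin n, j ≠ i0 →
      σ * z < |X i0 ω + σ * D i0 ω - X j ω|) := by
    intro ω
    simp only [hAdef, Set.mem_preimage, hSdef, Set.mem_inter_iff, Set.mem_iInter,
      Set.mem_setOf_eq, hVdef, hWdef]
    exact ⟨fun ⟨h1, h2⟩ => ⟨h1, fun j hj => h2 ⟨j, hj⟩⟩, fun ⟨h1, h2⟩ => ⟨h1, fun j => h2 j.1 j.2⟩⟩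
  -- the event in the statement is the complement of A
  have hYi0 : ∀ ω, |Ychild σ X D i0 ω - X i0 ω| = σ * |D i0 ω| := by
    intro ω
    have : Ychild σ X D i0 ω - X i0 ω = σ * D i0 ω := by simp [Ychild]
    rw [this, abs_mul, abs_of_pos hσ]
  have hset : {ω | σ⁻¹ * |Ychild σ X D i0 ω - Xnear i0 ω| ≤ z} = Aᶜ := by
    ext ω
    have hmin : σ⁻¹ * |Ychild σ X D i0 ω - Xnear i0 ω| ≤ z ↔
        ∃ j, |Ychild σ X D i0 ω - X j ω| ≤ σ * z := by
      rw [inv_mul_le_iff₀ hσ]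
      constructor
      · intro h
        obtain ⟨j, hje⟩ := hNear.2.1 i0 ω
        exact ⟨j, by rw [← hje]; exact h⟩
      · rintro ⟨j, hj⟩
        exact (hNear.2.2 i0 j ω).trans hj
    simp only [Set.mem_setOf_eq, Set.mem_compl_iff, hAmem, not_and_or, not_lt, not_forall,
      Classical.not_imp]
    rw [hmin]
    constructor
    · rintro ⟨j, hj⟩
      by_cases hji : j = i0
      · subst hji
        rw [hYi0] at hj
        exact Or.inl (le_of_mul_le_mul_left hj hσ)
      · refine Or.inr ⟨j, hji, ?_⟩
        simpa [Ychild] using hj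
    · rintro (hD | ⟨j, hji, hj⟩)
      · refine ⟨i0, ?_⟩
        rw [hYi0]
        exact mul_le_mul_of_nonneg_left hD hσ.le
      · refine ⟨j, ?_⟩
        simpa [Ychild] using hj
  have hPcompl : (P Aᶜ).toReal = 1 - (P A).toReal := by
    rw [measure_compl hAmeas (measure_ne_top P A), measure_univ,
      ENNReal.toReal_sub_of_le prob_le_one ENNReal.one_ne_top, ENNReal.toReal_one]
  -- relating G to μD
  set Ez : Set ℝ := {t | z < |t|} with hEzdef
  have hEz : MeasurableSet Ez := measurableSet_lt measurable_const measurable_abs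
  have hgbar : (μD Ez).toReal = 1 - (P {ω | |D i0 ω| ≤ z}).toReal := by
    have h1 : μD Ez = P ({ω | |D i0 ω| ≤ z}ᶜ) := by
      rw [hμDdef, Measure.map_apply hDmeas hEz]
      congr 1
      ext ω
      simp [hEzdef, not_le]
    rw [h1, measure_compl (measurableSet_le hDmeas.abs measurable_const) (measure_ne_top _ _),
      measure_univ, ENNReal.toReal_sub_of_le prob_le_one ENNReal.one_ne_top, ENNReal.toReal_one]
  -- independence and laws
  have hIndepXD : IndepFun (X i0) (D i0) P := by
    have h := hM.indep.indepFun (show (Sum.inl i0 : Fin n ⊕ Fin n) ≠ Sum.inr i0 by simp)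
    exact h
  have lawV : P.map V = μX.prod μD := by
    have h := (indepFun_iff_map_prod_eq_prod_map_map hXmeas.aemeasurable
      hDmeas.aemeasurable).mp hIndepXD
    rw [hVdef, h, hM.lawX i0, hμXdef, hμDdef]
  have hmeas_all : ∀ i : Fin n ⊕ Fin n, Measurable (Sum.elim X D i) := by
    rintro (i | i)
    exacts [hM.X_meas i, hM.D_meas i]
  set Tf : Finset (Fin n ⊕ Fin n) :=
    Finset.univ.image (fun j : {j : Fin n // j ≠ i0} => (Sum.inl j.1 : Fin n ⊕ Fin n)) with hTfdef
  have hmT : ∀ j : {j : Fin n // j ≠ i0}, (Sum.inl j.1 : Fin n ⊕ Fin n) ∈ Tf :=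
    fun j => Finset.mem_image_of_mem _ (Finset.mem_univ j)
  have hVW : IndepFun V W P := by
    set Sf : Finset (Fin n ⊕ Fin n) := {Sum.inl i0, Sum.inr i0} with hSfdef
    have hST : Disjoint Sf Tf := by
      rw [Finset.disjoint_left]
      rintro a ha haT
      rw [hSfdef, Finset.mem_insert, Finset.mem_singleton] at ha
      rw [hTfdef, Finset.mem_image] at haT
      obtain ⟨j, -, hj⟩ := haT
      rcases ha with rfl | rfl
      · exact j.2 (Sum.inl.inj hj)
      · exact Sum.inl_ne_inr hj
    have hbase := hM.indep.indepFun_finset Sf Tf hST hmeas_all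
    have hm1 : (Sum.inl i0 : Fin n ⊕ Fin n) ∈ Sf := by simp [hSfdef]
    have hm2 : (Sum.inr i0 : Fin n ⊕ Fin n) ∈ Sf := by simp [hSfdef]
    have hc := hbase.comp (φ := fun g : (Sf → ℝ) => (g ⟨_, hm1⟩, g ⟨_, hm2⟩))
      (ψ := fun (g : (Tf → ℝ)) (j : {j : Fin n // j ≠ i0}) => g ⟨Sum.inl j.1, hmT j⟩)
      (show Measurable fun g : (Sf → ℝ) => (g ⟨_, hm1⟩, g ⟨_, hm2⟩) from
        (measurable_pi_apply _).prodMk (measurable_pi_apply _))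
      (measurable_pi_lambda _ fun j => measurable_pi_apply _)
    exact hc
  have lawJoint : P.map (fun ω => (V ω, W ω)) = μV.prod μW := by
    have h := (indepFun_iff_map_prod_eq_prod_map_map hV.aemeasurable hW.aemeasurable).mp hVW
    rw [h, lawV, hμVdef, hμWdef]
  -- box formula for μW
  have hcard : Fintype.card {j : Fin n // j ≠ i0} = n - 1 := by
    simp [Fintype.card_subtype_compl]
  have hBox : ∀ s : Set ℝ, MeasurableSet s →
      μW (Set.univ.pi fun _ : {j : Fin n // j ≠ i0} => s) = (μX s) ^ (n - 1) := by
    intro s hs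
    rw [hμWdef, Measure.map_apply hW (MeasurableSet.univ_pi fun _ => hs)]
    have hpre : W ⁻¹' (Set.univ.pi fun _ => s) = ⋂ j : {j : Fin n // j ≠ i0}, X j.1 ⁻¹' s := by
      ext ω
      simp [hWdef, Set.mem_pi]
    rw [hpre]
    have hinter : (⋂ j : {j : Fin n // j ≠ i0}, X j.1 ⁻¹' s) =
        ⋂ i ∈ Tf, Sum.elim X D i ⁻¹' (Sum.elim (fun _ => s) (fun _ => (Set.univ : Set ℝ)) i) := by
      ext ω
      simp only [Set.mem_iInter, hTfdef, Finset.mem_image, Finset.mem_univ, true_and]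
      constructor
      · rintro h i ⟨j, rfl⟩
        exact h j
      · intro h j
        exact h _ ⟨j, rfl⟩
    rw [hinter, hM.indep.measure_inter_preimage_eq_mul Tf
      (sets := Sum.elim (fun _ => s) fun _ => (Set.univ : Set ℝ))
      (fun i _ => by rcases i with i | i; exacts [hs, MeasurableSet.univ])]
    rw [hTfdef, Finset.prod_image (fun x _ y _ h => Subtype.ext (Sum.inl.inj h))]
    have heach : ∀ j : {j : Fin n // j ≠ i0},
        P (Sum.elim X D ((Sum.inl j.1 : Fin n ⊕ Fin n)) ⁻¹' Sum.elim (fun _ => s) (fun _ => (Set.univ : Set ℝ)) ((Sum.inl j.1 : Fin n ⊕ Fin n))) = μX s := by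
      intro j
      show P (X j.1 ⁻¹' s) = μX s
      rw [← Measure.map_apply (hM.X_meas j.1) hs, hM.lawX j.1, hμXdef]
    rw [Finset.prod_congr rfl fun j _ => heach j, Finset.prod_const, Finset.card_univ, hcard]
  -- main identity
  have hPA : P A = ∫⁻ v, μW (Prod.mk v ⁻¹' S_set) ∂μV := by
    rw [hAdef, ← Measure.map_apply (hV.prodMk hW) hS, lawJoint, Measure.prod_apply hS]
  -- the good-region value
  have hq : ∀ y : ℝ, σ * z ≤ y → y ≤ 1 - σ * z →
      μX {t | σ * z < |y - t|} = ENNReal.ofReal (1 - 2 * σ * z) := by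
    intro y h1 h2
    have hmeasE : MeasurableSet {t : ℝ | σ * z < |y - t|} :=
      measurableSet_lt measurable_const ((measurable_const.sub measurable_id).abs)
    have hseteq : {t : ℝ | σ * z < |y - t|} ∩ Set.Icc (0:ℝ) 1 =
        Set.Icc (0:ℝ) 1 \ Set.Icc (y - σ * z) (y + σ * z) := by
      ext t
      simp only [Set.mem_inter_iff, Set.mem_setOf_eq, Set.mem_diff, Set.mem_Icc, lt_abs,
        not_and, not_le]
      constructor
      · rintro ⟨h | h, ht⟩
        · exact ⟨ht, fun h3 => by linarith⟩
        · exact ⟨ht, fun h3 => by linarith⟩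
      · rintro ⟨ht, h3⟩
        refine ⟨?_, ht⟩
        by_cases h4 : y - σ * z ≤ t
        · right; linarith [h3 h4]
        · left; linarith
    rw [hμXdef, Measure.restrict_apply hmeasE, hseteq,
      measure_diff (Set.Icc_subset_Icc (by linarith) (by linarith))
        measurableSet_Icc.nullMeasurableSet
        (by rw [Real.volume_Icc]; exact ENNReal.ofReal_ne_top),
      Real.volume_Icc, Real.volume_Icc]
    have hr : y + σ * z - (y - σ * z) = 2 * σ * z := by ring
    rw [hr, sub_zero]
    exact (ENNReal.ofReal_sub 1 (by positivity)).symm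
  -- the boundary region
  set Bad : Set (ℝ × ℝ) := {v | v.1 + σ * v.2 < σ * z ∨ 1 - σ * z < v.1 + σ * v.2} with hBaddef
  have hBadMeas : MeasurableSet Bad := by
    refine MeasurableSet.union ?_ ?_
    · exact measurableSet_lt (measurable_fst.add (measurable_snd.const_mul σ)) measurable_const
    · exact measurableSet_lt measurable_const (measurable_fst.add (measurable_snd.const_mul σ))
  set Hc : ℝ × ℝ → ℝ≥0∞ :=
    Set.indicator {v : ℝ × ℝ | z < |v.2|}
      (fun _ => ENNReal.ofReal (1 - 2 * σ * z) ^ (n - 1)) with hHcdef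
  have hmeasV2 : MeasurableSet {v : ℝ × ℝ | z < |v.2|} :=
    measurableSet_lt measurable_const measurable_snd.abs
  have hHcmeas : Measurable Hc := measurable_const.indicator hmeasV2
  have hgood : ∀ v : ℝ × ℝ, v ∉ Bad → μW (Prod.mk v ⁻¹' S_set) = Hc v := by
    intro v hv
    simp only [hBaddef, Set.mem_setOf_eq, not_or, not_lt] at hv
    by_cases hv2 : z < |v.2|
    · have hpre : Prod.mk v ⁻¹' S_set =
          Set.univ.pi fun _ : {j : Fin n // j ≠ i0} => {t : ℝ | σ * z < |v.1 + σ * v.2 - t|} := by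
        ext w
        simp [hSdef, Set.mem_pi, hv2]
      have hms : MeasurableSet {t : ℝ | σ * z < |v.1 + σ * v.2 - t|} :=
        measurableSet_lt measurable_const ((measurable_const.sub measurable_id).abs)
      rw [hpre, hBox {t : ℝ | σ * z < |v.1 + σ * v.2 - t|} hms, hq _ hv.1 hv.2,
        hHcdef, Set.indicator_of_mem (s := {v : ℝ × ℝ | z < |v.2|}) hv2]
    · have hpre : Prod.mk v ⁻¹' S_set = ∅ := by
        ext w
        simp [hSdef, hv2]
      rw [hpre, measure_empty, hHcdef,
        Set.indicator_of_notMem (s := {v : ℝ × ℝ | z < |v.2|}) hv2]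
  have hG0le : ∀ v : ℝ × ℝ, μW (Prod.mk v ⁻¹' S_set) ≤ 1 := fun v => prob_le_one
  have hHcle : ∀ v, Hc v ≤ 1 := by
    intro v
    refine Set.indicator_apply_le' (fun _ => ?_) (fun _ => zero_le)
    exact pow_le_one' (ENNReal.ofReal_le_one.mpr (by linarith)) _
  -- comparison
  have hub1 : P A ≤ (∫⁻ v, Hc v ∂μV) + μV Bad := by
    rw [hPA, ← lintegral_indicator_one hBadMeas,
      ← lintegral_add_right _ (measurable_one.indicator hBadMeas)]
    refine lintegral_mono fun v => ?_
    by_cases hv : v ∈ Bad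
    · rw [Set.indicator_of_mem hv]
      exact (hG0le v).trans (by simpa using le_add_self (a := (1:ℝ≥0∞)) (b := Hc v))
    · rw [Set.indicator_of_notMem hv, add_zero, hgood v hv]
  have hub2 : (∫⁻ v, Hc v ∂μV) ≤ P A + μV Bad := by
    rw [hPA, ← lintegral_indicator_one hBadMeas,
      ← lintegral_add_right _ (measurable_one.indicator hBadMeas)]
    refine lintegral_mono fun v => ?_
    by_cases hv : v ∈ Bad
    · rw [Set.indicator_of_mem hv]
      exact (hHcle v).trans (by simpa using le_add_self (a := (1:ℝ≥0∞)) (b := μW (Prod.mk v ⁻¹' S_set)))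
    · rw [Set.indicator_of_notMem hv, add_zero, hgood v hv]
  have hHcint : (∫⁻ v, Hc v ∂μV) = μD Ez * ENNReal.ofReal (1 - 2 * σ * z) ^ (n - 1) := by
    rw [hHcdef, lintegral_indicator hmeasV2, setLIntegral_const]
    have hseteq : {v : ℝ × ℝ | z < |v.2|} = (Set.univ : Set ℝ) ×ˢ Ez := by
      ext v
      simp [hEzdef]
    rw [hseteq, hμVdef, Measure.prod_prod, hμX_univ, one_mul, mul_comm]
  -- bounding the boundary region
  have hBadBound : μV Bad ≤ ENNReal.ofReal (2 * σ * z + 2 * σ * m) := by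
    rw [hμVdef, Measure.prod_apply_symm hBadMeas]
    have hptw : ∀ d : ℝ, μX ((fun x => (x, d)) ⁻¹' Bad) ≤ ENNReal.ofReal (2 * σ * (z + |d|)) := by
      intro d
      have hsub : ((fun x : ℝ => (x, d)) ⁻¹' Bad) ⊆
          Set.Iio (σ * z - σ * d) ∪ Set.Ioi (1 - σ * z - σ * d) := by
        intro x hx
        simp only [hBaddef, Set.mem_preimage, Set.mem_setOf_eq] at hx
        rcases hx with h | h
        · exact Or.inl (by simp only [Set.mem_Iio]; linarith)
        · exact Or.inr (by simp only [Set.mem_Ioi]; linarith)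
      have hd1 : σ * z - σ * d ≤ σ * z + σ * |d| := by
        have := neg_le_abs d
        nlinarith
      have hd2 : σ * z + σ * d ≤ σ * z + σ * |d| := by
        have := le_abs_self d
        nlinarith
      have h1 : μX (Set.Iio (σ * z - σ * d)) ≤ ENNReal.ofReal (σ * z + σ * |d|) := by
        rw [hμXdef, Measure.restrict_apply measurableSet_Iio]
        refine (measure_mono (show Set.Iio (σ * z - σ * d) ∩ Set.Icc (0:ℝ) 1 ⊆
          Set.Ico (0:ℝ) (σ * z - σ * d) from fun x hx => Set.mem_Ico.mpr ⟨hx.2.1, hx.1⟩)).trans ?_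
        rw [Real.volume_Ico, sub_zero]
        exact ENNReal.ofReal_le_ofReal hd1
      have h2 : μX (Set.Ioi (1 - σ * z - σ * d)) ≤ ENNReal.ofReal (σ * z + σ * |d|) := by
        rw [hμXdef, Measure.restrict_apply measurableSet_Ioi]
        refine (measure_mono (show Set.Ioi (1 - σ * z - σ * d) ∩ Set.Icc (0:ℝ) 1 ⊆
          Set.Ioc (1 - σ * z - σ * d) 1 from fun x hx => Set.mem_Ioc.mpr ⟨hx.1, hx.2.2⟩)).trans ?_
        rw [Real.volume_Ioc]
        refine ENNReal.ofReal_le_ofReal (by linarith)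
      calc μX ((fun x => (x, d)) ⁻¹' Bad)
          ≤ μX (Set.Iio (σ * z - σ * d) ∪ Set.Ioi (1 - σ * z - σ * d)) := measure_mono hsub
        _ ≤ μX (Set.Iio (σ * z - σ * d)) + μX (Set.Ioi (1 - σ * z - σ * d)) := measure_union_le _ _
        _ ≤ ENNReal.ofReal (σ * z + σ * |d|) + ENNReal.ofReal (σ * z + σ * |d|) := add_le_add h1 h2
        _ = ENNReal.ofReal (2 * σ * (z + |d|)) := by
            rw [← ENNReal.ofReal_add (by positivity) (by positivity)]
            congr 1
            ring
    calc (∫⁻ d, μX ((fun x => (x, d)) ⁻¹' Bad) ∂μD)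
        ≤ ∫⁻ d, ENNReal.ofReal (2 * σ * (z + |d|)) ∂μD := lintegral_mono hptw
      _ = ENNReal.ofReal (2 * σ * z + 2 * σ * m) := by
          have hsplit : ∀ d : ℝ, ENNReal.ofReal (2 * σ * (z + |d|)) =
              ENNReal.ofReal (2 * σ * z) + ENNReal.ofReal (2 * σ) * ENNReal.ofReal |d| := by
            intro d
            rw [← ENNReal.ofReal_mul (by positivity), ← ENNReal.ofReal_add (by positivity)
              (by positivity)]
            congr 1
            ring
          simp_rw [hsplit]
          rw [lintegral_add_left measurable_const,
            lintegral_const_mul _ measurable_abs.ennreal_ofReal, lintegral_const,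
            measure_univ, mul_one]
          have hDabs : (∫⁻ d, ENNReal.ofReal |d| ∂μD) = ENNReal.ofReal m := by
            rw [hμDdef, lintegral_map measurable_abs.ennreal_ofReal hDmeas, ← hm,
              ofReal_integral_eq_lintegral_ofReal hInt (ae_of_all _ fun ω => abs_nonneg _)]
          rw [hDabs, ← ENNReal.ofReal_mul (by positivity),
            ← ENNReal.ofReal_add (by positivity) (by positivity)]
  -- put everything together
  have hPAne : P A ≠ ⊤ := measure_ne_top P A
  have hb'ne : μD Ez * ENNReal.ofReal (1 - 2 * σ * z) ^ (n - 1) ≠ ⊤ :=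
    ENNReal.mul_ne_top (measure_ne_top _ _) (ENNReal.pow_ne_top ENNReal.ofReal_ne_top)
  have hBadne : μV Bad ≠ ⊤ := measure_ne_top _ _
  have hkey : |(P A).toReal - (μD Ez * ENNReal.ofReal (1 - 2 * σ * z) ^ (n - 1)).toReal|
      ≤ (μV Bad).toReal := by
    refine abs_toReal_sub_le' hPAne hb'ne hBadne ?_ ?_
    · rw [← hHcint]; exact hub1
    · rw [← hHcint]; exact hub2
  have hb'toReal : (μD Ez * ENNReal.ofReal (1 - 2 * σ * z) ^ (n - 1)).toReal
      = (μD Ez).toReal * (1 - 2 * σ * z) ^ (n - 1) := by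
    rw [ENNReal.toReal_mul, ENNReal.toReal_pow, ENNReal.toReal_ofReal (by linarith)]
  have hBadReal : (μV Bad).toReal ≤ 2 * σ * z + 2 * σ * m :=
    ENNReal.toReal_le_of_le_ofReal (by positivity) hBadBound
  rw [hset, hPcompl]
  rw [← hgbar]
  have habs : (1 - (P A).toReal) - (1 - (μD Ez).toReal * (1 - 2 * σ * z) ^ (n - 1))
      = -((P A).toReal - (μD Ez).toReal * (1 - 2 * σ * z) ^ (n - 1)) := by ring
  rw [habs, abs_neg, ← hb'toReal]
  refine hkey.trans (hBadReal.trans ?_)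
  rw [abs_of_nonneg hm0]
  nlinarith [mul_nonneg (mul_nonneg hm0 hσ.le) hz0]
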